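/- Let Ω = {ω1, …, ωn} with n ≥ 1 and let μ* ∈ Δ(Ω) satisfy min_{ω∈Ω} μ*(ω) ≥ p0 > 0. Suppose for each i = 2, …, n the number ρ̂_{i1} ≥ 0 satisfies |ρ̂_{i1} − μ*(ωi)/μ*(ω1)| ≤ ε'. Define μ̂(ω1) = 1/(1 + Σ_{i=2}^{n} ρ̂_{i1}) and μ̂(ωi) = ρ̂_{i1}·μ̂(ω1) for i = 2, …, n. Then ‖μ̂ − μ*‖₁ = Σ_{i=1}^{n} |μ̂(ωi) − μ*(ωi)| ≤ 3nε'/p0. -/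

import Mathlib

open Finset

/-- Claim 1, accuracy of the reconstructed prior: if every ratio
`μ*(ωi)/μ*(ω1)` is estimated within `ε'` and the prior estimate `μ̂` is reconstructed
by normalizing the estimated ratios, then `‖μ̂ − μ*‖₁ ≤ 3nε'/p0`.
States are indexed by `Fin n` with `ω1 = 0`. -/
theorem prior_reconstruction_accuracy
    {n : ℕ} [NeZero n]
    (μstar ρ μhat : Fin n → ℝ) (p0 ε' : ℝ)
    (hμ0 : ∀ i, 0 ≤ μstar i) (hμ1 : ∑ i, μstar i = 1)
    (hp0 : 0 < p0) (hmin : ∀ i, p0 ≤ μstar i)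
    (hε' : 0 ≤ ε')
    (hρ0 : ∀ i : Fin n, i ≠ 0 → 0 ≤ ρ i)
    (hρ : ∀ i : Fin n, i ≠ 0 → |ρ i - μstar i / μstar 0| ≤ ε')
    (hhat0 : μhat 0 = 1 / (1 + ∑ i ∈ Finset.univ.erase 0, ρ i))
    (hhat : ∀ i : Fin n, i ≠ 0 → μhat i = ρ i * μhat 0) :
    ∑ i, |μhat i - μstar i| ≤ 3 * n * ε' / p0 := by
  classical
  set e := Finset.univ.erase (0 : Fin n) with he
  have hμ0pos : 0 < μstar 0 := lt_of_lt_of_le hp0 (hmin 0)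
  have hμ0le1 : μstar 0 ≤ 1 := by
    rw [← hμ1]
    exact Finset.single_le_sum (fun i _ => hμ0 i) (Finset.mem_univ 0)
  have hp0le1 : p0 ≤ 1 := le_trans (hmin 0) hμ0le1
  set S := ∑ i ∈ e, ρ i with hSdef
  set T := ∑ i ∈ e, μstar i / μstar 0 with hTdef
  have hS0 : 0 ≤ S := Finset.sum_nonneg fun i hi => hρ0 i (Finset.ne_of_mem_erase hi)
  have hT0 : 0 ≤ T := Finset.sum_nonneg fun i _ => div_nonneg (hμ0 i) hμ0pos.le
  have hsum : μstar 0 + ∑ i ∈ e, μstar i = 1 := by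
    rw [he, Finset.add_sum_erase _ _ (Finset.mem_univ 0), hμ1]
  have hTeq : 1 + T = 1 / μstar 0 := by
    have hT' : T = (1 - μstar 0) / μstar 0 := by
      rw [hTdef, ← Finset.sum_div]
      congr 1; linarith
    rw [hT']; field_simp; ring
  have hcard : (e.card : ℝ) ≤ n := by
    have h2 : e.card ≤ n := le_trans (Finset.card_erase_le) (by simp)
    exact_mod_cast h2
  have hST : |S - T| ≤ n * ε' := by
    calc |S - T| = |∑ i ∈ e, (ρ i - μstar i / μstar 0)| := by
          rw [Finset.sum_sub_distrib]
    _ ≤ ∑ i ∈ e, |ρ i - μstar i / μstar 0| := Finset.abs_sum_le_sum_abs _ _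
    _ ≤ ∑ _i ∈ e, ε' := Finset.sum_le_sum fun i hi => hρ i (Finset.ne_of_mem_erase hi)
    _ = e.card * ε' := by rw [Finset.sum_const, nsmul_eq_mul]
    _ ≤ n * ε' := mul_le_mul_of_nonneg_right hcard hε'
  have h1S : (0:ℝ) < 1 + S := by linarith
  have h1T : (0:ℝ) < 1 + T := by linarith
  have hhat0pos : 0 < μhat 0 := by rw [hhat0]; positivity
  have hhat0le1 : μhat 0 ≤ 1 := by
    rw [hhat0, div_le_one h1S]; linarith
  have hμ0eq : μstar 0 = 1 / (1 + T) := by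
    rw [hTeq]; field_simp
  have h0diff : |μhat 0 - μstar 0| ≤ n * ε' := by
    have hd : μhat 0 - μstar 0 = (T - S) / ((1 + S) * (1 + T)) := by
      rw [hhat0, hμ0eq]
      field_simp
      ring
    rw [hd, abs_div]
    have hden : (1:ℝ) ≤ |(1 + S) * (1 + T)| := by
      rw [abs_of_pos (by positivity)]; nlinarith
    calc |T - S| / |(1 + S) * (1 + T)| ≤ |T - S| :=
          div_le_self (abs_nonneg _) hden
      _ = |S - T| := abs_sub_comm _ _
      _ ≤ n * ε' := hST
  have hsum_e : ∑ i ∈ e, |μhat i - μstar i| ≤ n * ε' + n * ε' * T := by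
    have hterm : ∀ i ∈ e, |μhat i - μstar i| ≤ ε' + μstar i / μstar 0 * (n * ε') := by
      intro i hi
      have hi0 : i ≠ 0 := Finset.ne_of_mem_erase hi
      have hd : μhat i - μstar i =
          (ρ i - μstar i / μstar 0) * μhat 0 + μstar i / μstar 0 * (μhat 0 - μstar 0) := by
        rw [hhat i hi0]
        field_simp
        ring
      rw [hd]
      calc |(ρ i - μstar i / μstar 0) * μhat 0 + μstar i / μstar 0 * (μhat 0 - μstar 0)|
          ≤ |(ρ i - μstar i / μstar 0) * μhat 0| + |μstar i / μstar 0 * (μhat 0 - μstar 0)| :=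
            abs_add_le _ _
        _ = |ρ i - μstar i / μstar 0| * μhat 0 + μstar i / μstar 0 * |μhat 0 - μstar 0| := by
            rw [abs_mul, abs_mul, abs_of_pos hhat0pos,
              abs_of_nonneg (div_nonneg (hμ0 i) hμ0pos.le)]
        _ ≤ ε' * 1 + μstar i / μstar 0 * (n * ε') :=
            add_le_add (mul_le_mul (hρ i hi0) hhat0le1 hhat0pos.le hε')
              (mul_le_mul_of_nonneg_left h0diff (div_nonneg (hμ0 i) hμ0pos.le))
        _ = ε' + μstar i / μstar 0 * (n * ε') := by ring
    calc ∑ i ∈ e, |μhat i - μstar i|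
        ≤ ∑ i ∈ e, (ε' + μstar i / μstar 0 * (n * ε')) := Finset.sum_le_sum hterm
      _ = e.card * ε' + T * (n * ε') := by
          rw [Finset.sum_add_distrib, Finset.sum_const, nsmul_eq_mul, ← Finset.sum_mul]
      _ ≤ n * ε' + n * ε' * T := by
          have := mul_le_mul_of_nonneg_right hcard hε'
          nlinarith
  have hTle : T ≤ 1 / p0 - 1 := by
    have : 1 / μstar 0 ≤ 1 / p0 := by
      apply one_div_le_one_div_of_le hp0 (hmin 0)
    linarith [hTeq ▸ this]
  have hsplit : ∑ i, |μhat i - μstar i| = |μhat 0 - μstar 0| + ∑ i ∈ e, |μhat i - μstar i| :=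
    (Finset.add_sum_erase Finset.univ (fun i => |μhat i - μstar i|) (Finset.mem_univ 0)).symm
  rw [hsplit]
  have hN : 0 ≤ (n:ℝ) * ε' := by positivity
  have key : (n:ℝ) * ε' + (n * ε' + n * ε' * T) ≤ 3 * n * ε' / p0 := by
    have hTp : T * p0 ≤ 1 - p0 := by
      have := mul_le_mul_of_nonneg_right hTle hp0.le
      have h1 : 1 / p0 * p0 = 1 := by field_simp
      nlinarith
    rw [le_div_iff₀ hp0]
    nlinarith [mul_le_mul_of_nonneg_left hTp hN]
  linarith [hsum_e, h0diff]
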